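/- There exists an absolute constant C > 0 (independent of all parameters) such that the following holds. Let (S, 𝒮) be a measurable space, let Q be a Markov kernel on S × 𝒮 with invariant probability distribution π, and let τ ≥ 1 be an integer such that for every integer k ≥ 1, sup_{z, z' ∈ S} (1/2)·‖Q^k(z, ·) − Q^k(z', ·)‖_TV ≤ (1/4)^{⌊k/τ⌋} (uniform geometric ergodicity with mixing time τ). Let (Z_i)_{i ≥ 0} be the canonical Markov chain with kernel Q started from an arbitrary initial distribution ξ on (S, 𝒮). Let d ≥ 1, σ ≥ 0, and let g : S → ℝ^d be a bounded measurable function with ∫ g dπ = 0 and ‖g(z)‖ ≤ σ for all z ∈ S. Then for every integer n ≥ 1: E_ξ[ ‖ (1/n)·Σ_{i=1}^n g(Z_i) ‖² ] ≤ C·τ·σ²/n. -/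

import Mathlib

open MeasureTheory ProbabilityTheory
open scoped ProbabilityTheory

/-- Iterates `Q^k` of a Markov kernel. -/
noncomputable def kernelPow {S : Type} [MeasurableSpace S] (Q : Kernel S S) : ℕ → Kernel S S
  | 0 => Kernel.id
  | n + 1 => Q ∘ₖ kernelPow Q n

section Aux
variable {S : Type} [MeasurableSpace S]

lemma kernelPow_isMarkov (Q : Kernel S S) [IsMarkovKernel Q] (m : ℕ) :
    IsMarkovKernel (kernelPow Q m) := by
  induction m with
  | zero => show IsMarkovKernel Kernel.id; infer_instance
  | succ n ih => show IsMarkovKernel (Q ∘ₖ kernelPow Q n); exact Kernel.IsMarkovKernel.comp _ _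

lemma integrable_bdd {α E : Type*} [MeasurableSpace α] {μ : Measure α} [IsFiniteMeasure μ]
    [NormedAddCommGroup E] {f : α → E} (hf : AEStronglyMeasurable f μ) {B : ℝ}
    (h : ∀ x, ‖f x‖ ≤ B) : Integrable f μ :=
  (integrable_const B).mono' hf (Filter.Eventually.of_forall h)

lemma bind_eq_map_snd (μ : Measure S) [SFinite μ] (κ : Kernel S S) [IsSFiniteKernel κ] :
    μ.bind κ = (μ ⊗ₘ κ).map Prod.snd := by
  ext s hs
  rw [Measure.bind_apply hs (Kernel.measurable κ).aemeasurable, Measure.map_apply measurable_snd hs,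
    Measure.compProd_apply (measurable_snd hs)]
  rfl

lemma integral_bind_real {μ : Measure S} [IsProbabilityMeasure μ] {κ : Kernel S S}
    [IsMarkovKernel κ] {f : S → ℝ} (hf : Measurable f) {B : ℝ} (hfB : ∀ z, |f z| ≤ B) :
    ∫ s, f s ∂(μ.bind κ) = ∫ z, ∫ s, f s ∂(κ z) ∂μ := by
  rw [bind_eq_map_snd, integral_map measurable_snd.aemeasurable hf.aestronglyMeasurable]
  exact Measure.integral_compProd (f := fun x : S × S => f x.2)
    (integrable_bdd ((hf.comp measurable_snd).aestronglyMeasurable)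
      (fun x : S × S => by simpa [Real.norm_eq_abs] using hfB x.2))

end Aux

section TV
variable {S : Type} [MeasurableSpace S]

lemma tv_integral_bound {μ ν : Measure S} [IsProbabilityMeasure μ] [IsProbabilityMeasure ν]
    {f : S → ℝ} (hf : Measurable f) {σ ε : ℝ} (hσ : 0 ≤ σ) (hε : 0 ≤ ε)
    (hfb : ∀ z, |f z| ≤ σ)
    (hTV : ∀ A : Set S, MeasurableSet A → |(μ A).toReal - (ν A).toReal| ≤ ε) :
    |∫ z, f z ∂μ - ∫ z, f z ∂ν| ≤ 2 * σ * ε := by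
  set h : S → ℝ := fun s => f s + σ with hh
  have h_nn : ∀ s, 0 ≤ h s := fun s => by have := abs_le.1 (hfb s); simp [hh]; linarith [this.1]
  have h_bdd : ∀ s, h s ≤ 2 * σ := fun s => by
    have := abs_le.1 (hfb s); simp [hh]; linarith [this.2]
  have hhm : Measurable h := hf.add_const σ
  have hint : ∀ (ρ : Measure S), IsProbabilityMeasure ρ → Integrable h ρ := fun ρ hρ =>
    integrable_bdd hhm.aestronglyMeasurable
      (fun s => by rw [Real.norm_eq_abs, abs_of_nonneg (h_nn s)]; exact h_bdd s)
  have hfint : ∀ (ρ : Measure S), IsProbabilityMeasure ρ → Integrable f ρ := fun ρ hρ =>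
    integrable_bdd hf.aestronglyMeasurable (fun s => by rw [Real.norm_eq_abs]; exact hfb s)
  -- layer cake for both measures
  have key : ∀ (ρ : Measure S), IsProbabilityMeasure ρ →
      ∫ s, f s ∂ρ + σ = ∫ t in Set.Ioc 0 (2*σ), (ρ {a | t ≤ h a}).toReal := by
    intro ρ hρ
    have := (hint ρ hρ).integral_eq_integral_Ioc_meas_le (M := 2*σ)
      (Filter.Eventually.of_forall h_nn) (Filter.Eventually.of_forall h_bdd)
    simp only [measureReal_def] at this
    rw [← this, hh]
    rw [integral_add (hfint ρ hρ) (integrable_const σ), integral_const]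
    simp
  -- integrability of layer functions
  have layer_meas : ∀ (ρ : Measure S), Measurable (fun t : ℝ => (ρ {a | t ≤ h a}).toReal) :=
    fun ρ => Measurable.ennreal_toReal
      (Antitone.measurable (fun s t hst => measure_mono (fun a ha => le_trans hst ha)))
  have layer_int : ∀ (ρ : Measure S), IsProbabilityMeasure ρ →
      Integrable (fun t : ℝ => (ρ {a | t ≤ h a}).toReal) (volume.restrict (Set.Ioc 0 (2*σ))) := by
    intro ρ hρ
    exact integrable_bdd (layer_meas ρ).aestronglyMeasurable (B := 1)
      (fun t => by
        rw [Real.norm_eq_abs, abs_of_nonneg ENNReal.toReal_nonneg]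
        exact ENNReal.toReal_le_of_le_ofReal zero_le_one (by simpa using prob_le_one))
  have heq : ∫ z, f z ∂μ - ∫ z, f z ∂ν =
      ∫ t in Set.Ioc 0 (2*σ), ((μ {a | t ≤ h a}).toReal - (ν {a | t ≤ h a}).toReal) := by
    rw [integral_sub (layer_int μ inferInstance) (layer_int ν inferInstance)]
    have h1 := key μ inferInstance
    have h2 := key ν inferInstance
    linarith
  rw [heq]
  have := norm_integral_le_of_norm_le_const (μ := volume.restrict (Set.Ioc 0 (2*σ)))
    (f := fun t => (μ {a | t ≤ h a}).toReal - (ν {a | t ≤ h a}).toReal) (C := ε)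
    (Filter.Eventually.of_forall (fun t => by
      rw [Real.norm_eq_abs]; exact hTV _ (hhm measurableSet_Ici)))
  rw [Real.norm_eq_abs] at this
  refine le_trans this ?_
  rw [measureReal_def, Measure.restrict_apply_univ, Real.volume_Ioc]
  rw [ENNReal.toReal_ofReal (by linarith)]
  nlinarith

end TV

section Contract
variable {S : Type} [MeasurableSpace S]

lemma bind_kernelPow {Q : Kernel S S} [IsMarkovKernel Q] {π : Measure S}
    (hinv : π.bind (fun z => Q z) = π) (m : ℕ) : π.bind (fun z => kernelPow Q m z) = π := by
  induction m with
  | zero =>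
    show π.bind (fun z => Kernel.id z) = π
    simp only [Kernel.id_apply]
    exact Measure.bind_dirac
  | succ n ih =>
    show π.bind (fun z => (Q ∘ₖ kernelPow Q n) z) = π
    simp only [Kernel.comp_apply]
    rw [← Measure.bind_bind (Kernel.measurable _).aemeasurable (Kernel.measurable Q).aemeasurable, ih, hinv]

lemma measurable_kernel_integral {E : Type*} [NormedAddCommGroup E] [NormedSpace ℝ E]
    (κ : Kernel S S) [IsMarkovKernel κ] {f : S → E} (hf : StronglyMeasurable f) :
    StronglyMeasurable (fun z => ∫ s, f s ∂(κ z)) :=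
  StronglyMeasurable.integral_kernel_prod_right' (κ := κ)
    (hf.comp_measurable measurable_snd)

/-- The key contraction bound: `‖∫ g ∂Q^m(z)‖ ≤ 2 σ (1/4)^(m/τ)` for `m ≥ 1`. -/
lemma contraction_bound {Q : Kernel S S} [IsMarkovKernel Q] {π : Measure S}
    [IsProbabilityMeasure π] (hinv : π.bind (fun z => Q z) = π)
    {τ : ℕ} (hτ : 1 ≤ τ)
    (hmix : ∀ k : ℕ, 1 ≤ k → ∀ z z' : S, ∀ A : Set S, MeasurableSet A →
      |((kernelPow Q k) z A).toReal - ((kernelPow Q k) z' A).toReal| ≤ (1 / 4 : ℝ) ^ (k / τ))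
    {d : ℕ} {σ : ℝ} (hσ : 0 ≤ σ) {g : S → EuclideanSpace ℝ (Fin d)} (hg : Measurable g)
    (hmean : ∫ z, g z ∂π = 0) (hgb : ∀ z, ‖g z‖ ≤ σ)
    {m : ℕ} (hm : 1 ≤ m) (z : S) :
    ‖∫ s, g s ∂(kernelPow Q m z)‖ ≤ 2 * σ * (1 / 4 : ℝ) ^ (m / τ) := by
  haveI := kernelPow_isMarkov Q m
  set ε : ℝ := (1 / 4 : ℝ) ^ (m / τ) with hε
  have hε0 : 0 ≤ ε := by positivity
  set w := ∫ s, g s ∂(kernelPow Q m z) with hw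
  rcases eq_or_ne w 0 with h0 | h0
  · rw [h0]; simp; positivity
  set u : EuclideanSpace ℝ (Fin d) := ‖w‖⁻¹ • w with hu
  have hun : ‖u‖ = 1 := by
    rw [hu, norm_smul, norm_inv, norm_norm, inv_mul_cancel₀ (norm_ne_zero_iff.2 h0)]
  set f : S → ℝ := fun s => inner ℝ u (g s) with hf
  have hfm : Measurable f := by
    apply Measurable.inner measurable_const hg
  have hfb : ∀ s, |f s| ≤ σ := fun s => by
    calc |f s| ≤ ‖u‖ * ‖g s‖ := abs_real_inner_le_norm u (g s)
    _ ≤ σ := by rw [hun, one_mul]; exact hgb s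
  have gint : ∀ (ρ : Measure S), IsProbabilityMeasure ρ → Integrable g ρ := fun ρ hρ =>
    integrable_bdd hg.aestronglyMeasurable hgb
  set F : S → ℝ := fun z' => ∫ s, f s ∂(kernelPow Q m z') with hF
  have hFz : F z = ‖w‖ := by
    rw [hF]
    show ∫ s, inner ℝ u (g s) ∂(kernelPow Q m z) = ‖w‖
    rw [integral_inner (gint _ inferInstance) u, ← hw, hu, real_inner_smul_left,
      real_inner_self_eq_norm_sq]
    field_simp [norm_ne_zero_iff.2 h0]
  have hFm : Measurable F := by
    have := measurable_kernel_integral (kernelPow Q m) hfm.stronglyMeasurable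
    exact this.measurable
  have hFb : ∀ z', |F z'| ≤ σ := fun z' => by
    rw [← Real.norm_eq_abs]
    calc ‖F z'‖ ≤ σ * ((kernelPow Q m z') Set.univ).toReal :=
      norm_integral_le_of_norm_le_const (Filter.Eventually.of_forall
        (fun s => by rw [Real.norm_eq_abs]; exact hfb s))
    _ = σ := by simp
  have hFint : ∫ z', F z' ∂π = 0 := by
    rw [hF]
    have : ∫ z', (∫ s, f s ∂(kernelPow Q m z')) ∂π = ∫ s, f s ∂(π.bind (fun z => kernelPow Q m z)) :=
      (integral_bind_real hfm hfb).symm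
    rw [this, bind_kernelPow hinv]
    show ∫ s, inner ℝ u (g s) ∂π = 0
    rw [integral_inner (gint _ inferInstance) u, hmean, inner_zero_right]
  -- pointwise TV bound
  have hpt : ∀ z', F z - F z' ≤ 2 * σ * ε := by
    intro z'
    have := tv_integral_bound (μ := kernelPow Q m z) (ν := kernelPow Q m z') hfm hσ hε0 hfb
      (fun A hA => hmix m hm z z' A hA)
    have := abs_le.1 this
    exact this.2
  have hFintg : Integrable F π := integrable_bdd hFm.aestronglyMeasurable hFb
  have : ‖w‖ = ∫ z', (F z - F z') ∂π := by
    rw [integral_sub (integrable_const _) hFintg, hFint, integral_const]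
    simp [hFz]
  rw [this]
  calc ∫ z', (F z - F z') ∂π ≤ ∫ _, 2 * σ * ε ∂π :=
    integral_mono ((integrable_const _).sub hFintg) (integrable_const _) hpt
  _ = 2 * σ * ε := by simp

end Contract

/-- The process `Z` is a Markov chain with transition kernel `Q`: conditionally on the whole
past `(Z_0, …, Z_k)`, the next state `Z_{k+1}` is distributed as `Q (Z_k)`. -/
def IsMarkovChainWith {S : Type} [MeasurableSpace S] {Ω : Type} [MeasurableSpace Ω]
    (P : Measure Ω) (Q : Kernel S S) (Z : ℕ → Ω → S) : Prop :=
  ∀ k : ℕ,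
    Measure.map (fun ω => ((fun i : Fin (k + 1) => Z i ω), Z (k + 1) ω)) P =
      (Measure.map (fun ω => (fun i : Fin (k + 1) => Z i ω)) P) ⊗ₘ
        (Q.comap (fun v : Fin (k + 1) → S => v (Fin.last k)) (measurable_pi_apply _))

section Markov
variable {S : Type} [MeasurableSpace S] {Ω : Type} [MeasurableSpace Ω]

lemma markov_pair {P : Measure Ω} [IsProbabilityMeasure P] {Q : Kernel S S} [IsMarkovKernel Q]
    {Z : ℕ → Ω → S} (hZ : ∀ k, Measurable (Z k)) (hMC : IsMarkovChainWith P Q Z) (k : ℕ) :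
    ∀ (m : ℕ) (φ : S × S → ℝ), Measurable φ → ∀ B : ℝ, (∀ p, |φ p| ≤ B) →
      ∫ ω, φ (Z k ω, Z (k + m) ω) ∂P =
        ∫ ω, ∫ s, φ (Z k ω, s) ∂(kernelPow Q m (Z k ω)) ∂P := by
  intro m
  induction m with
  | zero =>
    intro φ hφ B hB
    refine integral_congr_ae (Filter.Eventually.of_forall fun ω => ?_)
    show φ (Z k ω, Z (k + 0) ω) = ∫ s, φ (Z k ω, s) ∂(Kernel.id (Z k ω))
    rw [Kernel.id_apply]
    exact (integral_dirac' (fun s => φ (Z k ω, s)) (Z k ω)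
      ((hφ.comp measurable_prodMk_left : Measurable fun s => φ (Z k ω, s)).stronglyMeasurable)).symm
  | succ n ih =>
    intro φ hφ B hB
    set K := k + n with hK
    have hkK : k < K + 1 := by omega
    set idx : Fin (K + 1) := ⟨k, hkK⟩ with hidx
    set T : Ω → (Fin (K + 1) → S) × S :=
      fun ω => ((fun i : Fin (K + 1) => Z i ω), Z (K + 1) ω) with hT
    have hTm : Measurable T := by
      rw [hT]
      exact (measurable_pi_lambda (fun ω (i : Fin (K + 1)) => Z i ω) (fun i => hZ i)).prodMk
        (hZ (K + 1))
    have hHm : Measurable (fun ω => (fun i : Fin (K + 1) => Z i ω)) :=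
      measurable_pi_lambda _ (fun i => hZ i)
    set f : (Fin (K + 1) → S) × S → ℝ := fun p => φ (p.1 idx, p.2) with hfdef
    have hfm : Measurable f :=
      hφ.comp (((measurable_pi_apply idx).comp measurable_fst).prodMk measurable_snd)
    set ν := Measure.map (fun ω => (fun i : Fin (K + 1) => Z i ω)) P with hν
    haveI : IsProbabilityMeasure ν := Measure.isProbabilityMeasure_map hHm.aemeasurable
    set κ := Q.comap (fun v : Fin (K + 1) → S => v (Fin.last K)) (measurable_pi_apply _) with hκ
    set φ1 : S × S → ℝ := fun q => ∫ s, φ (q.1, s) ∂(Q q.2) with hφ1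
    have hφ1m : Measurable φ1 := by
      have : StronglyMeasurable (fun x : S × S => ∫ y, φ (x.1, y) ∂((Q.prodMkLeft S) x)) :=
        StronglyMeasurable.integral_kernel_prod_right' (κ := Q.prodMkLeft S)
          ((hφ.comp ((measurable_fst.comp measurable_fst).prodMk measurable_snd)).stronglyMeasurable)
      simpa [Kernel.prodMkLeft_apply] using this.measurable
    have hφ1B : ∀ q, |φ1 q| ≤ B := by
      intro q
      rw [← Real.norm_eq_abs]
      calc ‖φ1 q‖ ≤ B * ((Q q.2) Set.univ).toReal :=
        norm_integral_le_of_norm_le_const (Filter.Eventually.of_forall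
          (fun s => by rw [Real.norm_eq_abs]; exact hB _))
      _ = B := by simp
    have step1 : ∫ ω, φ (Z k ω, Z (k + (n + 1)) ω) ∂P = ∫ p, f p ∂(Measure.map T P) := by
      rw [integral_map hTm.aemeasurable hfm.aestronglyMeasurable]
      rfl
    have step2 : ∫ p, f p ∂(Measure.map T P) = ∫ v, φ1 (v idx, v (Fin.last K)) ∂ν := by
      rw [show Measure.map T P = ν ⊗ₘ κ from hMC K]
      rw [Measure.integral_compProd (integrable_bdd hfm.aestronglyMeasurable
        (fun p => by rw [Real.norm_eq_abs]; exact hB _))]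
      refine integral_congr_ae (Filter.Eventually.of_forall fun v => ?_)
      show ∫ b, f (v, b) ∂(κ v) = φ1 (v idx, v (Fin.last K))
      rw [hκ, Kernel.comap_apply]
    have step3 : ∫ v, φ1 (v idx, v (Fin.last K)) ∂ν = ∫ ω, φ1 (Z k ω, Z K ω) ∂P := by
      rw [hν]
      exact integral_map (f := fun v => φ1 (v idx, v (Fin.last K))) hHm.aemeasurable
        (hφ1m.comp ((measurable_pi_apply idx).prodMk (measurable_pi_apply _))).aestronglyMeasurable
    have step4 : ∫ ω, φ1 (Z k ω, Z K ω) ∂P =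
        ∫ ω, ∫ s', φ1 (Z k ω, s') ∂(kernelPow Q n (Z k ω)) ∂P := ih φ1 hφ1m B hφ1B
    have step5 : ∀ z : S, ∫ s', φ1 (z, s') ∂(kernelPow Q n z) =
        ∫ s, φ (z, s) ∂(kernelPow Q (n + 1) z) := by
      intro z
      haveI := kernelPow_isMarkov Q n
      show _ = ∫ s, φ (z, s) ∂((Q ∘ₖ kernelPow Q n) z)
      rw [Kernel.comp_apply]
      rw [integral_bind_real (f := fun s => φ (z, s))
        (hφ.comp measurable_prodMk_left) (fun s => hB _)]
    calc ∫ ω, φ (Z k ω, Z (k + (n + 1)) ω) ∂P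
        = ∫ ω, φ1 (Z k ω, Z K ω) ∂P := by rw [step1, step2, step3]
      _ = ∫ ω, ∫ s', φ1 (Z k ω, s') ∂(kernelPow Q n (Z k ω)) ∂P := step4
      _ = ∫ ω, ∫ s, φ (Z k ω, s) ∂(kernelPow Q (n + 1) (Z k ω)) ∂P := by
          refine integral_congr_ae (Filter.Eventually.of_forall fun ω => ?_)
          exact step5 (Z k ω)

end Markov

section Sums

lemma geom_quarter (n : ℕ) : ∑ q ∈ Finset.range n, (1/4 : ℝ) ^ q ≤ 4/3 := by
  rw [geom_sum_eq (by norm_num) n]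
  have h1 : (0:ℝ) ≤ (1/4 : ℝ) ^ n := by positivity
  have h2 : ((1/4 : ℝ)) ^ n ≤ 1 := pow_le_one₀ (by norm_num) (by norm_num)
  have : ((1/4:ℝ) ^ n - 1) / (1/4 - 1) = (1 - (1/4:ℝ)^n) / (3/4) := by ring
  rw [this]
  rw [div_le_iff₀ (by norm_num)]
  linarith

lemma sum_geom_div (τ : ℕ) (hτ : 1 ≤ τ) (n : ℕ) :
    ∑ m ∈ Finset.range n, (1/4 : ℝ) ^ (m / τ) ≤ 4/3 * τ := by
  classical
  rw [Finset.sum_comp (fun q => (1/4 : ℝ) ^ q) (fun m => m / τ)]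
  have hcard : ∀ q : ℕ, ((Finset.range n).filter (fun m => m / τ = q)).card ≤ τ := by
    intro q
    have hsub : (Finset.range n).filter (fun m => m / τ = q) ⊆ Finset.Ico (q * τ) (q * τ + τ) := by
      intro m hm
      simp only [Finset.mem_filter, Finset.mem_range] at hm
      obtain ⟨_, hq⟩ := hm
      subst hq
      refine Finset.mem_Ico.2 ⟨Nat.div_mul_le_self m τ, ?_⟩
      have h1 := Nat.mod_add_div' m τ
      have h2 := Nat.mod_lt m (show 0 < τ by omega)
      omega
    calc ((Finset.range n).filter (fun m => m / τ = q)).card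
        ≤ (Finset.Ico (q * τ) (q * τ + τ)).card := Finset.card_le_card hsub
    _ = τ := by rw [Nat.card_Ico]; omega
  calc ∑ q ∈ (Finset.range n).image (fun m => m / τ),
        ((Finset.range n).filter (fun m => m / τ = q)).card • (1/4 : ℝ) ^ q
      ≤ ∑ q ∈ (Finset.range n).image (fun m => m / τ), (τ : ℝ) * (1/4 : ℝ) ^ q := by
        refine Finset.sum_le_sum fun q _ => ?_
        rw [nsmul_eq_mul]
        have : (0:ℝ) ≤ (1/4 : ℝ) ^ q := by positivity
        exact mul_le_mul_of_nonneg_right (by exact_mod_cast hcard q) this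
    _ ≤ ∑ q ∈ Finset.range n, (τ : ℝ) * (1/4 : ℝ) ^ q := by
        refine Finset.sum_le_sum_of_subset_of_nonneg ?_ (fun q _ _ => by positivity)
        intro q hq
        simp only [Finset.mem_image, Finset.mem_range] at hq ⊢
        obtain ⟨m, hm, rfl⟩ := hq
        exact lt_of_le_of_lt (Nat.div_le_self m τ) hm
    _ = (τ : ℝ) * ∑ q ∈ Finset.range n, (1/4 : ℝ) ^ q := by rw [Finset.mul_sum]
    _ ≤ (τ : ℝ) * (4/3) := by
        have := geom_quarter n
        have hτ0 : (0:ℝ) ≤ τ := by positivity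
        nlinarith
    _ = 4/3 * τ := by ring

lemma row_sum_bound {e : ℕ → ℝ} (he : ∀ m, 0 ≤ e m) (n i : ℕ) (hi : i < n) :
    ∑ j ∈ Finset.range n, e (if i ≤ j then j - i else i - j) ≤ 2 * ∑ m ∈ Finset.range n, e m := by
  classical
  have hsplit : (Finset.range n) =
      (Finset.range n).filter (fun j => i ≤ j) ∪ (Finset.range n).filter (fun j => ¬ i ≤ j) :=
    (Finset.filter_union_filter_not_eq _ _).symm
  nth_rewrite 1 [hsplit]
  rw [Finset.sum_union (Finset.disjoint_filter_filter_not _ _ _)]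
  have h1 : ∑ j ∈ (Finset.range n).filter (fun j => i ≤ j), e (if i ≤ j then j - i else i - j)
      ≤ ∑ m ∈ Finset.range n, e m := by
    rw [Finset.sum_congr rfl (fun j hj => by
      simp only [Finset.mem_filter] at hj; rw [if_pos hj.2])]
    rw [← Finset.sum_image (g := fun j => j - i) (f := e)
      (fun a ha b hb hab => by
        simp only [Finset.mem_coe, Finset.mem_filter] at ha hb; dsimp only at hab; omega)]
    refine Finset.sum_le_sum_of_subset_of_nonneg ?_ (fun m _ _ => he m)
    intro m hm
    simp only [Finset.mem_image, Finset.mem_filter, Finset.mem_range] at hm ⊢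
    obtain ⟨j, ⟨hjn, hij⟩, rfl⟩ := hm
    omega
  have h2 : ∑ j ∈ (Finset.range n).filter (fun j => ¬ i ≤ j), e (if i ≤ j then j - i else i - j)
      ≤ ∑ m ∈ Finset.range n, e m := by
    rw [Finset.sum_congr rfl (fun j hj => by
      simp only [Finset.mem_filter] at hj; rw [if_neg hj.2])]
    rw [← Finset.sum_image (g := fun j => i - j) (f := e)
      (fun a ha b hb hab => by
        simp only [Finset.mem_coe, Finset.mem_filter, Finset.mem_range, not_le] at ha hb
        dsimp only at hab; omega)]
    refine Finset.sum_le_sum_of_subset_of_nonneg ?_ (fun m _ _ => he m)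
    intro m hm
    simp only [Finset.mem_image, Finset.mem_filter, Finset.mem_range, not_le] at hm ⊢
    obtain ⟨j, ⟨hjn, hij⟩, rfl⟩ := hm
    omega
  linarith

end Sums

section Cov
variable {S : Type} [MeasurableSpace S] {Ω : Type} [MeasurableSpace Ω]

lemma cov_bound {P : Measure Ω} [IsProbabilityMeasure P] {Q : Kernel S S} [IsMarkovKernel Q]
    {π : Measure S} [IsProbabilityMeasure π] (hinv : π.bind (fun z => Q z) = π)
    {τ : ℕ} (hτ : 1 ≤ τ)
    (hmix : ∀ k : ℕ, 1 ≤ k → ∀ z z' : S, ∀ A : Set S, MeasurableSet A →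
      |((kernelPow Q k) z A).toReal - ((kernelPow Q k) z' A).toReal| ≤ (1 / 4 : ℝ) ^ (k / τ))
    {d : ℕ} {σ : ℝ} (hσ : 0 ≤ σ) {g : S → EuclideanSpace ℝ (Fin d)} (hg : Measurable g)
    (hmean : ∫ z, g z ∂π = 0) (hgb : ∀ z, ‖g z‖ ≤ σ)
    {Z : ℕ → Ω → S} (hZ : ∀ k, Measurable (Z k)) (hMC : IsMarkovChainWith P Q Z)
    (i j : ℕ) (hij : i ≤ j) :
    ∫ ω, (inner ℝ (g (Z (i+1) ω)) (g (Z (j+1) ω)) : ℝ) ∂P ≤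
      2 * σ ^ 2 * (1 / 4 : ℝ) ^ ((j - i) / τ) := by
  set m := j - i with hm
  set k := i + 1 with hk
  have hjk : j + 1 = k + m := by omega
  set φ : S × S → ℝ := fun p => inner ℝ (g p.1) (g p.2) with hφdef
  have hφm : Measurable φ := Measurable.inner (hg.comp measurable_fst) (hg.comp measurable_snd)
  have hφB : ∀ p, |φ p| ≤ σ ^ 2 := fun p => by
    calc |φ p| ≤ ‖g p.1‖ * ‖g p.2‖ := abs_real_inner_le_norm _ _
    _ ≤ σ * σ := mul_le_mul (hgb _) (hgb _) (norm_nonneg _) hσ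
    _ = σ ^ 2 := (sq σ).symm
  have gint : ∀ (ρ : Measure S), IsProbabilityMeasure ρ → Integrable g ρ := fun ρ hρ =>
    integrable_bdd hg.aestronglyMeasurable hgb
  have key : ∫ ω, φ (Z k ω, Z (k + m) ω) ∂P =
      ∫ ω, ∫ s, φ (Z k ω, s) ∂(kernelPow Q m (Z k ω)) ∂P :=
    markov_pair hZ hMC k m φ hφm (σ ^ 2) hφB
  have hC : ∀ z : S, ‖∫ s, g s ∂(kernelPow Q m z)‖ ≤ 2 * σ * (1 / 4 : ℝ) ^ (m / τ) := by
    intro z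
    rcases Nat.eq_zero_or_pos m with h0 | h1
    · rw [h0]
      show ‖∫ s, g s ∂(Kernel.id z)‖ ≤ _
      rw [Kernel.id_apply, integral_dirac' _ _ hg.stronglyMeasurable]
      simpa using le_trans (hgb z) (by linarith)
    · exact contraction_bound hinv hτ hmix hσ hg hmean hgb h1 z
  haveI := kernelPow_isMarkov Q m
  have hpt : ∀ ω, (∫ s, φ (Z k ω, s) ∂(kernelPow Q m (Z k ω))) =
      inner ℝ (g (Z k ω)) (∫ s, g s ∂(kernelPow Q m (Z k ω))) := fun ω => by
    show ∫ s, (inner ℝ (g (Z k ω)) (g s) : ℝ) ∂(kernelPow Q m (Z k ω)) = _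
    exact integral_inner (gint _ inferInstance) _
  have hbd : ∀ ω, ‖∫ s, φ (Z k ω, s) ∂(kernelPow Q m (Z k ω))‖ ≤
      2 * σ ^ 2 * (1 / 4 : ℝ) ^ (m / τ) := fun ω => by
    rw [hpt ω, Real.norm_eq_abs]
    calc |(inner ℝ (g (Z k ω)) (∫ s, g s ∂(kernelPow Q m (Z k ω))) : ℝ)|
        ≤ ‖g (Z k ω)‖ * ‖∫ s, g s ∂(kernelPow Q m (Z k ω))‖ := abs_real_inner_le_norm _ _
      _ ≤ σ * (2 * σ * (1 / 4 : ℝ) ^ (m / τ)) :=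
          mul_le_mul (hgb _) (hC _) (norm_nonneg _) hσ
      _ = 2 * σ ^ 2 * (1 / 4 : ℝ) ^ (m / τ) := by ring
  have : ∫ ω, (inner ℝ (g (Z (i+1) ω)) (g (Z (j+1) ω)) : ℝ) ∂P =
      ∫ ω, ∫ s, φ (Z k ω, s) ∂(kernelPow Q m (Z k ω)) ∂P := by
    rw [← key]
    refine integral_congr_ae (Filter.Eventually.of_forall fun ω => ?_)
    rw [hjk]
  rw [this]
  calc ∫ ω, ∫ s, φ (Z k ω, s) ∂(kernelPow Q m (Z k ω)) ∂P
      ≤ ‖∫ ω, ∫ s, φ (Z k ω, s) ∂(kernelPow Q m (Z k ω)) ∂P‖ := le_abs_self _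
    _ ≤ 2 * σ ^ 2 * (1 / 4 : ℝ) ^ (m / τ) * (P Set.univ).toReal :=
        norm_integral_le_of_norm_le_const (Filter.Eventually.of_forall hbd)
    _ = 2 * σ ^ 2 * (1 / 4 : ℝ) ^ (m / τ) := by simp

end Cov

theorem markov_batching_variance_bound :
    ∃ C : ℝ, 0 < C ∧
      ∀ (S : Type) (_ : MeasurableSpace S) (Q : Kernel S S), IsMarkovKernel Q →
        ∀ (π : Measure S), IsProbabilityMeasure π → π.bind (fun z => Q z) = π →
          ∀ τ : ℕ, 1 ≤ τ →
            (∀ k : ℕ, 1 ≤ k → ∀ z z' : S, ∀ A : Set S, MeasurableSet A →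
              |((kernelPow Q k) z A).toReal - ((kernelPow Q k) z' A).toReal| ≤
                (1 / 4 : ℝ) ^ (k / τ)) →
            ∀ (d : ℕ), 1 ≤ d → ∀ σ : ℝ, 0 ≤ σ →
              ∀ g : S → EuclideanSpace ℝ (Fin d), Measurable g →
                (∫ z, g z ∂π = 0) → (∀ z, ‖g z‖ ≤ σ) →
                  ∀ (Ω : Type) (_ : MeasurableSpace Ω) (P : Measure Ω),
                    IsProbabilityMeasure P →
                    ∀ Z : ℕ → Ω → S, (∀ k, Measurable (Z k)) →
                      IsMarkovChainWith P Q Z →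
                      ∀ n : ℕ, 1 ≤ n →
                        ∫ ω, ‖(1 / (n : ℝ)) • ∑ i ∈ Finset.range n, g (Z (i + 1) ω)‖ ^ 2 ∂P ≤
                          C * τ * σ ^ 2 / n := by
  refine ⟨6, by norm_num, ?_⟩
  intro S _ Q hQ π hπ hinv τ hτ hmix d hd σ hσ g hg hmean hgb Ω _ P hP Z hZ hMC n hn
  haveI := hQ; haveI := hπ; haveI := hP
  have hn0 : (0:ℝ) < n := by exact_mod_cast hn
  -- pointwise expansion of the squared norm
  have hpt : ∀ ω, ‖(1 / (n : ℝ)) • ∑ i ∈ Finset.range n, g (Z (i + 1) ω)‖ ^ 2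
      = (1 / (n : ℝ)) ^ 2 * ∑ i ∈ Finset.range n, ∑ j ∈ Finset.range n,
          (inner ℝ (g (Z (i + 1) ω)) (g (Z (j + 1) ω)) : ℝ) := by
    intro ω
    rw [norm_smul, mul_pow]
    congr 1
    · rw [Real.norm_eq_abs, sq_abs]
    · rw [← real_inner_self_eq_norm_sq, sum_inner]
      exact Finset.sum_congr rfl fun i _ => inner_sum _ _ _
  have hterm_int : ∀ i j : ℕ,
      Integrable (fun ω => (inner ℝ (g (Z (i + 1) ω)) (g (Z (j + 1) ω)) : ℝ)) P := by
    intro i j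
    refine integrable_bdd (Measurable.inner (hg.comp (hZ _)) (hg.comp (hZ _))).aestronglyMeasurable
      (B := σ ^ 2) (fun ω => ?_)
    rw [Real.norm_eq_abs]
    calc |(inner ℝ (g (Z (i + 1) ω)) (g (Z (j + 1) ω)) : ℝ)|
        ≤ ‖g (Z (i + 1) ω)‖ * ‖g (Z (j + 1) ω)‖ := abs_real_inner_le_norm _ _
      _ ≤ σ * σ := mul_le_mul (hgb _) (hgb _) (norm_nonneg _) hσ
      _ = σ ^ 2 := (sq σ).symm
  have h1 : ∫ ω, ‖(1 / (n : ℝ)) • ∑ i ∈ Finset.range n, g (Z (i + 1) ω)‖ ^ 2 ∂P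
      = (1 / (n : ℝ)) ^ 2 * ∑ i ∈ Finset.range n, ∑ j ∈ Finset.range n,
          ∫ ω, (inner ℝ (g (Z (i + 1) ω)) (g (Z (j + 1) ω)) : ℝ) ∂P := by
    rw [integral_congr_ae (Filter.Eventually.of_forall hpt), integral_const_mul]
    congr 1
    rw [integral_finset_sum _ (fun i _ => integrable_finset_sum _ (fun j _ => hterm_int i j))]
    exact Finset.sum_congr rfl fun i _ => integral_finset_sum _ (fun j _ => hterm_int i j)
  -- per-term covariance bound
  have h2 : ∀ i j : ℕ, ∫ ω, (inner ℝ (g (Z (i + 1) ω)) (g (Z (j + 1) ω)) : ℝ) ∂P ≤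
      2 * σ ^ 2 * (1 / 4 : ℝ) ^ ((if i ≤ j then j - i else i - j) / τ) := by
    intro i j
    rcases le_or_gt i j with hij | hij
    · rw [if_pos hij]
      exact cov_bound hinv hτ hmix hσ hg hmean hgb hZ hMC i j hij
    · rw [if_neg (not_le.2 hij)]
      have : ∫ ω, (inner ℝ (g (Z (i + 1) ω)) (g (Z (j + 1) ω)) : ℝ) ∂P
          = ∫ ω, (inner ℝ (g (Z (j + 1) ω)) (g (Z (i + 1) ω)) : ℝ) ∂P :=
        integral_congr_ae (Filter.Eventually.of_forall fun ω => real_inner_comm _ _)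
      rw [this]
      exact cov_bound hinv hτ hmix hσ hg hmean hgb hZ hMC j i hij.le
  -- sum up
  have h3 : ∑ i ∈ Finset.range n, ∑ j ∈ Finset.range n,
      ∫ ω, (inner ℝ (g (Z (i + 1) ω)) (g (Z (j + 1) ω)) : ℝ) ∂P
      ≤ (n : ℝ) * (2 * σ ^ 2 * (2 * (4 / 3 * τ))) := by
    calc ∑ i ∈ Finset.range n, ∑ j ∈ Finset.range n,
        ∫ ω, (inner ℝ (g (Z (i + 1) ω)) (g (Z (j + 1) ω)) : ℝ) ∂P
        ≤ ∑ i ∈ Finset.range n, (2 * σ ^ 2 * (2 * (4 / 3 * τ))) := by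
          refine Finset.sum_le_sum fun i hi => ?_
          calc ∑ j ∈ Finset.range n,
              ∫ ω, (inner ℝ (g (Z (i + 1) ω)) (g (Z (j + 1) ω)) : ℝ) ∂P
              ≤ ∑ j ∈ Finset.range n,
                2 * σ ^ 2 * (1 / 4 : ℝ) ^ ((if i ≤ j then j - i else i - j) / τ) :=
                Finset.sum_le_sum fun j _ => h2 i j
            _ = 2 * σ ^ 2 * ∑ j ∈ Finset.range n,
                (fun m => (1 / 4 : ℝ) ^ (m / τ)) (if i ≤ j then j - i else i - j) := by
                rw [Finset.mul_sum]
            _ ≤ 2 * σ ^ 2 * (2 * ∑ m ∈ Finset.range n, (1 / 4 : ℝ) ^ (m / τ)) := by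
                refine mul_le_mul_of_nonneg_left ?_ (by positivity)
                exact row_sum_bound (e := fun m => (1 / 4 : ℝ) ^ (m / τ))
                  (fun m => by positivity) n i (Finset.mem_range.1 hi)
            _ ≤ 2 * σ ^ 2 * (2 * (4 / 3 * τ)) := by
                have := sum_geom_div τ hτ n
                have h0 : (0:ℝ) ≤ 2 * σ ^ 2 := by positivity
                nlinarith
      _ = (n : ℝ) * (2 * σ ^ 2 * (2 * (4 / 3 * τ))) := by
          rw [Finset.sum_const, Finset.card_range, nsmul_eq_mul]
  rw [h1]
  have hτ0 : (0:ℝ) ≤ τ := by positivity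
  calc (1 / (n : ℝ)) ^ 2 * ∑ i ∈ Finset.range n, ∑ j ∈ Finset.range n,
      ∫ ω, (inner ℝ (g (Z (i + 1) ω)) (g (Z (j + 1) ω)) : ℝ) ∂P
      ≤ (1 / (n : ℝ)) ^ 2 * ((n : ℝ) * (2 * σ ^ 2 * (2 * (4 / 3 * τ)))) :=
        mul_le_mul_of_nonneg_left h3 (by positivity)
    _ = (16 / 3) * τ * σ ^ 2 / n := by field_simp; ring
    _ ≤ 6 * τ * σ ^ 2 / n := by
        rw [div_le_div_iff_of_pos_right hn0]
        nlinarith
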